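/- arXiv:1702.05471 — 4 statements merged into one kernel-verified Lean document; each statement's English description precedes it below -/
import Mathlib

section
/- Let K be a p×p real PSD matrix with unit diagonal. Then for every j ≥ 1, the j-th Hadamard power K^{∘j} can be written as a finite sum Σ_k E_k K E_k over diagonal matrices E_k satisfying Σ_k E_k² = I. -/
open Matrix

/-- Entrywise (Hadamard) `j`-th power of a matrix. -/
def hadamardPow {p : ℕ} (K : Matrix (Fin p) (Fin p) ℝ) (j : ℕ) :
    Matrix (Fin p) (Fin p) ℝ :=
  Matrix.of fun i i' => (K i i') ^ j

lemma sum_pow_aux {α : Type*} [Fintype α] [DecidableEq α] (f : α → ℝ) (n : ℕ) :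
    (∑ k, f k) ^ n = ∑ t : Fin n → α, ∏ m, f (t m) := by
  rw [show ((∑ k, f k) ^ n) = ∏ _m : Fin n, ∑ k, f k by simp]
  rw [Finset.prod_univ_sum]
  simp

theorem stmt5 {p : ℕ} (K : Matrix (Fin p) (Fin p) ℝ) (hK : K.PosSemidef)
    (hdiag : ∀ i, K i i = 1) (j : ℕ) (hj : 1 ≤ j) :
    ∃ E : Fin (p ^ (j - 1)) → (Fin p → ℝ),
      (hadamardPow K j =
        ∑ k, Matrix.diagonal (E k) * K * Matrix.diagonal (E k)) ∧
      (∑ k, Matrix.diagonal (E k) ^ 2 = (1 : Matrix (Fin p) (Fin p) ℝ)) := by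
  obtain ⟨n, rfl⟩ := Nat.exists_eq_add_of_le hj
  open scoped MatrixOrder in
  set U := CFC.sqrt K with hU
  open scoped MatrixOrder in
  have hUU : U * U = K := CFC.sqrt_mul_sqrt_self K hK.nonneg
  have hsym : ∀ a b, U a b = U b a := by
    intro a b
    open scoped MatrixOrder in
    have h := (CFC.sqrt_nonneg K).posSemidef.isHermitian
    have := congrFun (congrFun h b) a
    simpa [Matrix.conjTranspose_apply] using this
  have hKentry : ∀ i i', K i i' = ∑ k, U k i * U k i' := by
    intro i i'
    rw [← hUU]
    simp only [Matrix.mul_apply]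
    exact Finset.sum_congr rfl fun k _ => by rw [hsym i k]
  have hcard : Fintype.card (Fin n → Fin p) = p ^ (1 + n - 1) := by
    simp [show 1 + n - 1 = n from by omega]
  let e : (Fin n → Fin p) ≃ Fin (p ^ (1 + n - 1)) := Fintype.equivFinOfCardEq hcard
  refine ⟨fun k i => ∏ m, U (e.symm k m) i, ?_, ?_⟩
  · ext i i'
    simp only [hadamardPow, Matrix.of_apply, Matrix.sum_apply, Matrix.mul_diagonal,
      Matrix.diagonal_mul]
    rw [← Equiv.sum_comp e
      (fun k => (∏ m, U (e.symm k m) i) * K i i' * (∏ m, U (e.symm k m) i'))]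
    simp only [Equiv.symm_apply_apply]
    have h1 : ∀ t : Fin n → Fin p,
        (∏ m, U (t m) i) * K i i' * (∏ m, U (t m) i')
          = (∏ m, U (t m) i * U (t m) i') * K i i' := by
      intro t; rw [Finset.prod_mul_distrib]; ring
    simp_rw [h1]
    rw [← Finset.sum_mul, ← sum_pow_aux (fun k => U k i * U k i') n, ← hKentry]
    rw [pow_add, pow_one]; ring
  · have hdpow : ∀ k : Fin (p ^ (1 + n - 1)),
        Matrix.diagonal (fun i => ∏ m, U (e.symm k m) i) ^ 2
          = Matrix.diagonal (fun i => (∏ m, U (e.symm k m) i) ^ 2) := by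
      intro k
      simp [pow_two, Matrix.diagonal_mul_diagonal]
    simp_rw [hdpow]
    ext i i'
    simp only [Matrix.sum_apply, Matrix.diagonal_apply, Matrix.one_apply]
    by_cases h : i = i'
    · subst h
      simp only [if_pos rfl, if_true]
      rw [← Equiv.sum_comp e (fun k => (∏ m, U (e.symm k m) i) ^ 2)]
      simp only [Equiv.symm_apply_apply]
      have h2 : ∀ t : Fin n → Fin p,
          (∏ m, U (t m) i) ^ 2 = ∏ m, (U (t m) i) ^ 2 := by
        intro t; rw [Finset.prod_pow]
      simp_rw [h2]
      rw [← sum_pow_aux (fun k => (U k i) ^ 2) n]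
      have : (∑ k, (U k i) ^ 2) = K i i := by
        rw [hKentry]; congr 1; funext k; rw [pow_two]
      rw [this, hdiag, one_pow]
    · simp [h]
end

section
/- Let K be a p×p real PSD matrix with unit diagonal, and let X = Σ_{j=1}^N D_j K^{∘j} D_j where the D_j are diagonal matrices with Σ_{j=1}^N D_j² = I. Then the eigenvalue vector of K majorizes the eigenvalue vector of X. -/
/-- Eigenvalues of a Hermitian real matrix, sorted in decreasing order. -/
noncomputable def sortedEigs {p : ℕ} (K : Matrix (Fin p) (Fin p) ℝ) (hK : K.IsHermitian) : List ℝ :=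
  (List.ofFn hK.eigenvalues).mergeSort (· ≥ ·)

/-- Sum of the top `q` eigenvalues (the `q`-Ky Fan norm for PSD matrices). -/
noncomputable def topSum {p : ℕ} (K : Matrix (Fin p) (Fin p) ℝ) (hK : K.IsHermitian) (q : ℕ) : ℝ :=
  ((sortedEigs K hK).take q).sum

namespace StmtAux

open Matrix

variable {p : ℕ}

/-! ### Sorted eigenvalue list basics -/

lemma sortedEigs_eq (A : Matrix (Fin p) (Fin p) ℝ) (hA : A.IsHermitian) :
    ∃ σ : Equiv.Perm (Fin p), Antitone (hA.eigenvalues ∘ σ) ∧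
      sortedEigs A hA = List.ofFn (hA.eigenvalues ∘ σ) := by
  set f := hA.eigenvalues with hf
  refine ⟨(Fin.revPerm).trans (Tuple.sort f), ?_, ?_⟩
  · intro i j hij
    exact Tuple.monotone_sort f (by simpa using Fin.rev_le_rev.mpr hij)
  · have hanti : ∀ ⦃i j : Fin p⦄, i < j →
        f ((Fin.revPerm.trans (Tuple.sort f)) i) ≥ f ((Fin.revPerm.trans (Tuple.sort f)) j) := by
      intro i j hij
      exact Tuple.monotone_sort f (by simpa using Fin.rev_le_rev.mpr hij.le)
    have key : ∀ {l₁ l₂ : List ℝ}, l₁.Perm l₂ → l₁.Pairwise (· ≥ ·) → l₂.Pairwise (· ≥ ·) →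
        l₁ = l₂ := fun h1 h2 h3 => h1.eq_of_pairwise (fun a b _ _ x y => le_antisymm y x) h2 h3
    refine key ?_ ?_ ?_
    · exact ((List.mergeSort_perm _ _).trans (Equiv.Perm.ofFn_comp_perm _ f).symm)
    · have := List.pairwise_mergeSort (le := fun a b : ℝ => decide (a ≥ b))
        (by intro a b c h1 h2; simp only [decide_eq_true_eq] at *; exact le_trans h2 h1)
        (by intro a b; simpa [decide_eq_true_eq] using le_total b a)
        (List.ofFn f)
      exact this.imp (by simp)
    · exact List.pairwise_ofFn.mpr fun i j h => hanti h

lemma filter_lt_eq_map {q : ℕ} (hqp : q ≤ p) :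
    (Finset.univ.filter fun i : Fin p => (i : ℕ) < q) =
      Finset.map (Fin.castLEEmb hqp) Finset.univ := by
  ext j
  simp only [Finset.mem_filter, Finset.mem_univ, true_and, Finset.mem_map,
    Fin.castLEEmb, Function.Embedding.coeFn_mk]
  constructor
  · intro h; exact ⟨⟨j, h⟩, by simp [Fin.castLE]⟩
  · rintro ⟨i, rfl⟩; simpa using i.2

lemma core_ineq {q : ℕ} (hq1 : 1 ≤ q) (hqp : q ≤ p) (g c : Fin p → ℝ)
    (hg : Antitone g) (hc0 : ∀ i, 0 ≤ c i) (hc1 : ∀ i, c i ≤ 1)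
    (hsum : ∑ i, c i = (q : ℝ)) :
    ∑ i, g i * c i ≤ ∑ i ∈ Finset.univ.filter (fun i : Fin p => (i : ℕ) < q), g i := by
  have hq1p : q - 1 < p := lt_of_lt_of_le (Nat.sub_lt hq1 one_pos) hqp
  set t : ℝ := g ⟨q - 1, hq1p⟩ with ht
  have hcard : (Finset.univ.filter fun i : Fin p => (i : ℕ) < q).card = q := by
    rw [filter_lt_eq_map hqp]; simp
  have step1 : ∑ i, g i * c i = (∑ i, (g i - t) * c i) + t * q := by
    have : ∑ i, g i * c i = (∑ i, (g i - t) * c i) + ∑ i, t * c i := by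
      rw [← Finset.sum_add_distrib]; apply Finset.sum_congr rfl; intros; ring
    rw [this, ← Finset.mul_sum, hsum]
  have step2 : ∑ i, (g i - t) * c i ≤ ∑ i, max (g i - t) 0 := by
    apply Finset.sum_le_sum
    intro i _
    rcases le_total t (g i) with h | h
    · calc (g i - t) * c i ≤ (g i - t) * 1 := by
            apply mul_le_mul_of_nonneg_left (hc1 i) (by linarith)
      _ = g i - t := mul_one _
      _ ≤ max (g i - t) 0 := le_max_left _ _
    · calc (g i - t) * c i ≤ 0 := mul_nonpos_of_nonpos_of_nonneg (by linarith) (hc0 i)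
      _ ≤ max (g i - t) 0 := le_max_right _ _
  have step3 : ∑ i, max (g i - t) 0 =
      ∑ i ∈ Finset.univ.filter (fun i : Fin p => (i : ℕ) < q), g i - t * q := by
    rw [← Finset.sum_filter_add_sum_filter_not Finset.univ (fun i : Fin p => (i : ℕ) < q)]
    have h1 : ∑ i ∈ Finset.univ.filter (fun i : Fin p => (i : ℕ) < q), max (g i - t) 0
        = ∑ i ∈ Finset.univ.filter (fun i : Fin p => (i : ℕ) < q), (g i - t) := by
      apply Finset.sum_congr rfl
      intro i hi
      simp only [Finset.mem_filter] at hi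
      have : g i ≥ t := hg (show (⟨i, i.2⟩ : Fin p) ≤ ⟨q - 1, hq1p⟩ by
        simp [Fin.le_def]; omega)
      simp [max_eq_left]; linarith
    have h2 : ∑ i ∈ Finset.univ.filter (fun i : Fin p => ¬ (i : ℕ) < q), max (g i - t) 0 = 0 := by
      apply Finset.sum_eq_zero
      intro i hi
      simp only [Finset.mem_filter] at hi
      have : g i ≤ t := hg (show (⟨q - 1, hq1p⟩ : Fin p) ≤ i by
        simp [Fin.le_def]; omega)
      simp [max_eq_right]; linarith
    rw [h1, h2, add_zero, Finset.sum_sub_distrib, Finset.sum_const, hcard]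
    simp [mul_comm]
  linarith

lemma topSum_eq_filter_sum (A : Matrix (Fin p) (Fin p) ℝ) (hA : A.IsHermitian)
    (σ : Equiv.Perm (Fin p)) (heq : sortedEigs A hA = List.ofFn (hA.eigenvalues ∘ σ)) (q : ℕ) :
    topSum A hA q = ∑ i ∈ Finset.univ.filter (fun i : Fin p => (i : ℕ) < q),
      hA.eigenvalues (σ i) := by
  rw [topSum, heq, List.sum_take_ofFn]
  rfl

/-- Weighted sums of eigenvalues with weights in `[0,1]` summing to `q`
are at most `topSum _ _ q`. -/
lemma sum_mul_le_topSum (A : Matrix (Fin p) (Fin p) ℝ) (hA : A.IsHermitian)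
    {q : ℕ} (hq1 : 1 ≤ q) (hqp : q ≤ p) (c : Fin p → ℝ)
    (hc0 : ∀ i, 0 ≤ c i) (hc1 : ∀ i, c i ≤ 1) (hsum : ∑ i, c i = (q : ℝ)) :
    ∑ i, hA.eigenvalues i * c i ≤ topSum A hA q := by
  obtain ⟨σ, hanti, heq⟩ := sortedEigs_eq A hA
  rw [topSum_eq_filter_sum A hA σ heq q]
  have : ∑ i, hA.eigenvalues i * c i = ∑ i, hA.eigenvalues (σ i) * c (σ i) :=
    (Equiv.sum_comp σ (fun i => hA.eigenvalues i * c i)).symm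
  rw [this]
  exact core_ineq hq1 hqp (hA.eigenvalues ∘ σ) (c ∘ σ) hanti (fun i => hc0 _) (fun i => hc1 _)
    (Equiv.sum_comp σ c ▸ hsum)

lemma exists_subset_topSum (A : Matrix (Fin p) (Fin p) ℝ) (hA : A.IsHermitian)
    {q : ℕ} (hqp : q ≤ p) :
    ∃ S : Finset (Fin p), S.card = q ∧ topSum A hA q = ∑ i ∈ S, hA.eigenvalues i := by
  obtain ⟨σ, hanti, heq⟩ := sortedEigs_eq A hA
  refine ⟨(Finset.univ.filter fun i : Fin p => (i : ℕ) < q).image σ, ?_, ?_⟩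
  · rw [Finset.card_image_of_injective _ σ.injective, filter_lt_eq_map hqp]; simp
  · rw [topSum_eq_filter_sum A hA σ heq q, Finset.sum_image]
    intro a _ b _ h
    exact σ.injective h

/-! ### Spectral computations -/

lemma psd_diag_nonneg {M : Matrix (Fin p) (Fin p) ℝ} (h : M.PosSemidef) (i : Fin p) :
    0 ≤ M i i := by
  have := h.dotProduct_mulVec_nonneg (Pi.single i 1)
  simpa [dotProduct, mulVec, Pi.single_apply] using this

lemma spectral_real {A : Matrix (Fin p) (Fin p) ℝ} (hA : A.IsHermitian) :
    A = (hA.eigenvectorUnitary : Matrix (Fin p) (Fin p) ℝ) * diagonal hA.eigenvalues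
        * star (hA.eigenvectorUnitary : Matrix (Fin p) (Fin p) ℝ) := by
  have := hA.spectral_theorem
  simpa using this

lemma star_mul_self_eigU {A : Matrix (Fin p) (Fin p) ℝ} (hA : A.IsHermitian) :
    star (hA.eigenvectorUnitary : Matrix (Fin p) (Fin p) ℝ) *
      (hA.eigenvectorUnitary : Matrix (Fin p) (Fin p) ℝ) = 1 :=
  hA.eigenvectorUnitary.2.1

lemma mul_star_self_eigU {A : Matrix (Fin p) (Fin p) ℝ} (hA : A.IsHermitian) :
    (hA.eigenvectorUnitary : Matrix (Fin p) (Fin p) ℝ) *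
      star (hA.eigenvectorUnitary : Matrix (Fin p) (Fin p) ℝ) = 1 :=
  hA.eigenvectorUnitary.2.2

lemma trace_mul_eig {A : Matrix (Fin p) (Fin p) ℝ} (hA : A.IsHermitian)
    (Q : Matrix (Fin p) (Fin p) ℝ) :
    (Q * A).trace = ∑ i, hA.eigenvalues i *
      ((star (hA.eigenvectorUnitary : Matrix (Fin p) (Fin p) ℝ) * Q *
        (hA.eigenvectorUnitary : Matrix (Fin p) (Fin p) ℝ)) i i) := by
  set U := (hA.eigenvectorUnitary : Matrix (Fin p) (Fin p) ℝ)
  conv_lhs => rw [spectral_real hA]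
  rw [show Q * (U * diagonal hA.eigenvalues * star U) =
      (Q * U * diagonal hA.eigenvalues) * star U by noncomm_ring,
    trace_mul_cycle, trace]
  apply Finset.sum_congr rfl
  intro i _
  rw [diag_apply, mul_diagonal, ← mul_assoc]
  ring

/-- Ky Fan type bound: if `0 ≤ Q ≤ 1` and `tr Q = q` then `tr (Q A) ≤ topSum A q`. -/
lemma trace_mul_le_topSum {A : Matrix (Fin p) (Fin p) ℝ} (hA : A.IsHermitian)
    {Q : Matrix (Fin p) (Fin p) ℝ} (hQ : Q.PosSemidef) (hQ1 : (1 - Q).PosSemidef)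
    {q : ℕ} (hq1 : 1 ≤ q) (hqp : q ≤ p) (htr : Q.trace = (q : ℝ)) :
    (Q * A).trace ≤ topSum A hA q := by
  set U := (hA.eigenvectorUnitary : Matrix (Fin p) (Fin p) ℝ) with hU
  set c : Fin p → ℝ := fun i => (star U * Q * U) i i with hc
  have hc0 : ∀ i, 0 ≤ c i := fun i =>
    psd_diag_nonneg (by simpa using hQ.conjTranspose_mul_mul_same U) i
  have hkey : star U * (1 - Q) * U = 1 - star U * Q * U := by
    rw [mul_sub, sub_mul, mul_one, star_mul_self_eigU hA]
  have hc1 : ∀ i, c i ≤ 1 := by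
    intro i
    have := psd_diag_nonneg (show ((1 : Matrix (Fin p) (Fin p) ℝ) - star U * Q * U).PosSemidef by
      rw [← hkey]; simpa [star_eq_conjTranspose] using hQ1.conjTranspose_mul_mul_same U) i
    simp only [Matrix.sub_apply, one_apply_eq] at this
    linarith
  have hcs : ∑ i, c i = (q : ℝ) := by
    have : (star U * Q * U).trace = Q.trace := by
      rw [trace_mul_cycle, mul_star_self_eigU hA, one_mul]
    simpa [trace, hc] using this.trans htr
  rw [trace_mul_eig hA Q]
  exact sum_mul_le_topSum A hA hq1 hqp c hc0 hc1 hcs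

/-- For any subset `S` of indices there is a `Q` with `0 ≤ Q ≤ 1`, `tr Q = |S|` and
`tr (Q A) = ∑_{i ∈ S} λ_i`. -/
lemma exists_proj (A : Matrix (Fin p) (Fin p) ℝ) (hA : A.IsHermitian) (S : Finset (Fin p)) :
    ∃ Q : Matrix (Fin p) (Fin p) ℝ, Q.PosSemidef ∧ (1 - Q).PosSemidef ∧
      Q.trace = (S.card : ℝ) ∧ (Q * A).trace = ∑ i ∈ S, hA.eigenvalues i := by
  set U := (hA.eigenvectorUnitary : Matrix (Fin p) (Fin p) ℝ) with hU
  set χ : Fin p → ℝ := fun i => if i ∈ S then 1 else 0 with hχ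
  refine ⟨U * diagonal χ * star U, ?_, ?_, ?_, ?_⟩
  · have : (diagonal χ).PosSemidef := .diagonal (by intro i; by_cases h : i ∈ S <;> simp [hχ, h])
    simpa [star_eq_conjTranspose] using this.mul_mul_conjTranspose_same U
  · have heq : (1 : Matrix (Fin p) (Fin p) ℝ) - U * diagonal χ * star U
        = U * diagonal (fun i => 1 - χ i) * star U := by
      have : diagonal (fun i : Fin p => (1 : ℝ) - χ i) = 1 - diagonal χ := by
        rw [← diagonal_one, diagonal_sub]
      rw [this, mul_sub, sub_mul, mul_one, mul_star_self_eigU hA]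
    rw [heq]
    have : (diagonal fun i => 1 - χ i).PosSemidef :=
      .diagonal (by intro i; by_cases h : i ∈ S <;> simp [hχ, h])
    simpa [star_eq_conjTranspose] using this.mul_mul_conjTranspose_same U
  · rw [trace_mul_cycle, star_mul_self_eigU hA, one_mul, trace_diagonal]
    simp [hχ]
  · rw [trace_mul_eig hA]
    have : star U * (U * diagonal χ * star U) * U = diagonal χ := by
      rw [show star U * (U * diagonal χ * star U) * U
          = (star U * U) * diagonal χ * (star U * U) by noncomm_ring,
        star_mul_self_eigU hA, one_mul, mul_one]
    rw [this]
    simp only [diagonal_apply_eq, hχ, mul_ite, mul_one, mul_zero]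
    rw [Finset.sum_ite_mem, Finset.univ_inter]

/-- `topSum` at `p` is the trace. -/
lemma topSum_top (A : Matrix (Fin p) (Fin p) ℝ) (hA : A.IsHermitian) :
    topSum A hA p = A.trace := by
  have hlen : (sortedEigs A hA).length = p := by simp [sortedEigs]
  rw [topSum, List.take_of_length_le hlen.le, sortedEigs,
    (List.mergeSort_perm (List.ofFn hA.eigenvalues) _).sum_eq, List.sum_ofFn]
  conv_rhs => rw [spectral_real hA]
  rw [trace_mul_cycle, star_mul_self_eigU hA, one_mul, trace_diagonal]

/-! ### Hadamard products -/

lemma isHermitian_apply' {A : Matrix (Fin p) (Fin p) ℝ} (hA : A.IsHermitian) (a b : Fin p) :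
    A b a = A a b := by
  have := congrFun (congrFun hA a) b
  simpa [conjTranspose_apply] using this

lemma hadamard_psd {A B : Matrix (Fin p) (Fin p) ℝ} (hA : A.PosSemidef) (hB : B.PosSemidef) :
    (Matrix.of fun a b => A a b * B a b).PosSemidef := by
  obtain ⟨C, hC⟩ : ∃ C : Matrix (Fin p) (Fin p) ℝ, B = Cᴴ * C := by
    open MatrixOrder in exact CStarAlgebra.nonneg_iff_eq_star_mul_self.mp hB.nonneg
  refine PosSemidef.of_dotProduct_mulVec_nonneg ?_ ?_
  · ext a b
    simp only [conjTranspose_apply, of_apply, star_trivial]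
    rw [isHermitian_apply' hA.1 a b, isHermitian_apply' hB.1 a b]
  · intro x
    have L : (star x) ⬝ᵥ ((Matrix.of fun a b => A a b * B a b) *ᵥ x) =
        ∑ a, ∑ b, ∑ k, x a * A a b * C k a * C k b * x b := by
      subst hC
      simp only [dotProduct, mulVec, of_apply, mul_apply, conjTranspose_apply, star_trivial,
        Finset.mul_sum, Finset.sum_mul]
      apply Finset.sum_congr rfl; intro a _
      apply Finset.sum_congr rfl; intro b _
      apply Finset.sum_congr rfl; intro k _
      ring
    have R : ∀ k, (star fun a => C k a * x a) ⬝ᵥ (A *ᵥ fun a => C k a * x a) =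
        ∑ a, ∑ b, x a * A a b * C k a * C k b * x b := by
      intro k
      simp only [dotProduct, mulVec, star_trivial, Finset.mul_sum]
      apply Finset.sum_congr rfl; intro a _
      apply Finset.sum_congr rfl; intro b _
      ring
    have key : (star x) ⬝ᵥ ((Matrix.of fun a b => A a b * B a b) *ᵥ x) =
        ∑ k, (star fun a => C k a * x a) ⬝ᵥ (A *ᵥ fun a => C k a * x a) := by
      rw [L]
      rw [show (∑ a, ∑ b, ∑ k, x a * A a b * C k a * C k b * x b)
          = ∑ a, ∑ k, ∑ b, x a * A a b * C k a * C k b * x b from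
        Finset.sum_congr rfl fun a _ => Finset.sum_comm, Finset.sum_comm]
      exact Finset.sum_congr rfl fun k _ => (R k).symm
    rw [key]
    exact Finset.sum_nonneg fun k _ => hA.dotProduct_mulVec_nonneg _

lemma hadamardPow_psd {K : Matrix (Fin p) (Fin p) ℝ} (hK : K.PosSemidef) (j : ℕ) :
    (hadamardPow K j).PosSemidef := by
  induction j with
  | zero =>
    refine PosSemidef.of_dotProduct_mulVec_nonneg ?_ ?_
    · ext a b; simp [hadamardPow, conjTranspose_apply]
    · intro x
      have : (star x) ⬝ᵥ ((hadamardPow K 0) *ᵥ x) = (∑ a, x a) ^ 2 := by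
        simp [hadamardPow, dotProduct, mulVec, Finset.mul_sum, sq, Finset.sum_mul, mul_comm]
      rw [this]; positivity
  | succ j ih =>
    have : hadamardPow K (j + 1) = Matrix.of fun a b => K a b * (hadamardPow K j) a b := by
      ext a b; simp [hadamardPow]; ring
    rw [this]
    exact hadamard_psd hK ih

lemma psd_sum {ι : Type*} (s : Finset ι) (M : ι → Matrix (Fin p) (Fin p) ℝ)
    (h : ∀ j ∈ s, (M j).PosSemidef) : (∑ j ∈ s, M j).PosSemidef := by
  classical
  exact Finset.sum_induction M _ (fun a b ha hb => ha.add hb) Matrix.PosSemidef.zero h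

/-! ### The map Φ -/

variable {N : ℕ}

/-- The doubly-substochastic map associated to the data `K`, `D`. -/
noncomputable def Phi (K : Matrix (Fin p) (Fin p) ℝ) (D : Fin N → (Fin p → ℝ))
    (Q : Matrix (Fin p) (Fin p) ℝ) : Matrix (Fin p) (Fin p) ℝ :=
  Matrix.of fun a b => ∑ j : Fin N, D j a * Q a b * D j b * K a b ^ (j : ℕ)

lemma Phi_psd {K : Matrix (Fin p) (Fin p) ℝ} (hK : K.PosSemidef) (D : Fin N → (Fin p → ℝ))
    {Q : Matrix (Fin p) (Fin p) ℝ} (hQ : Q.PosSemidef) : (Phi K D Q).PosSemidef := by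
  have hrw : Phi K D Q = ∑ j : Fin N, Matrix.of fun a b =>
      (diagonal (D j) * Q * diagonal (D j)) a b * hadamardPow K (j : ℕ) a b := by
    ext a b
    simp only [Phi, of_apply, Matrix.sum_apply, mul_diagonal, diagonal_mul, hadamardPow]
    try (apply Finset.sum_congr rfl; intros; ring)
  rw [hrw]
  apply psd_sum
  intro j _
  have hconj : (diagonal (D j) * Q * diagonal (D j)).PosSemidef := by
    have := hQ.mul_mul_conjTranspose_same (diagonal (D j))
    simpa [diagonal_conjTranspose] using this
  exact hadamard_psd hconj (hadamardPow_psd hK _)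

lemma Phi_one {K : Matrix (Fin p) (Fin p) ℝ} {D : Fin N → (Fin p → ℝ)}
    (hdiag : ∀ i, K i i = 1) (hD' : ∀ a, ∑ j, D j a * D j a = 1) :
    Phi K D (1 : Matrix (Fin p) (Fin p) ℝ) = 1 := by
  ext a b
  by_cases h : a = b
  · subst h
    simp only [Phi, of_apply, one_apply_eq, hdiag, one_pow, mul_one]
    exact hD' a
  · simp [Phi, one_apply_ne h]

lemma Phi_sub_one {K : Matrix (Fin p) (Fin p) ℝ} {D : Fin N → (Fin p → ℝ)}
    (hdiag : ∀ i, K i i = 1) (hD' : ∀ a, ∑ j, D j a * D j a = 1)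
    (Q : Matrix (Fin p) (Fin p) ℝ) :
    Phi K D ((1 : Matrix (Fin p) (Fin p) ℝ) - Q) = 1 - Phi K D Q := by
  have h1 : Phi K D ((1 : Matrix (Fin p) (Fin p) ℝ) - Q)
      = Phi K D 1 - Phi K D Q := by
    ext a b
    simp only [Phi, of_apply, Matrix.sub_apply, ← Finset.sum_sub_distrib]
    apply Finset.sum_congr rfl; intros; ring
  rw [h1, Phi_one hdiag hD']

lemma Phi_trace {K : Matrix (Fin p) (Fin p) ℝ} {D : Fin N → (Fin p → ℝ)}
    (hdiag : ∀ i, K i i = 1) (hD' : ∀ a, ∑ j, D j a * D j a = 1)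
    (Q : Matrix (Fin p) (Fin p) ℝ) : (Phi K D Q).trace = Q.trace := by
  simp only [trace, diag_apply, Phi, of_apply, hdiag, one_pow, mul_one]
  apply Finset.sum_congr rfl
  intro a _
  have : ∑ j : Fin N, D j a * Q a a * D j a = Q a a * ∑ j : Fin N, D j a * D j a := by
    rw [Finset.mul_sum]; apply Finset.sum_congr rfl; intros; ring
  rw [this, hD', mul_one]

lemma Phi_trace_mul {K : Matrix (Fin p) (Fin p) ℝ} {D : Fin N → (Fin p → ℝ)}
    {X : Matrix (Fin p) (Fin p) ℝ} (hKh : K.IsHermitian)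
    (hXent : ∀ a b, X a b = ∑ j : Fin N, D j a * K a b ^ ((j : ℕ) + 1) * D j b)
    (Q : Matrix (Fin p) (Fin p) ℝ) :
    (Q * X).trace = (Phi K D Q * K).trace := by
  simp only [trace, diag_apply, mul_apply, Phi, of_apply]
  apply Finset.sum_congr rfl; intro a _
  apply Finset.sum_congr rfl; intro b _
  rw [hXent b a, Finset.mul_sum, Finset.sum_mul]
  apply Finset.sum_congr rfl; intro j _
  rw [isHermitian_apply' hKh a b]
  ring

end StmtAux

theorem stmt6 {p N : ℕ} (K : Matrix (Fin p) (Fin p) ℝ) (hK : K.PosSemidef)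
    (hdiag : ∀ i, K i i = 1)
    (D : Fin N → (Fin p → ℝ))
    (hD : ∑ j, Matrix.diagonal (D j) ^ 2 = (1 : Matrix (Fin p) (Fin p) ℝ))
    (X : Matrix (Fin p) (Fin p) ℝ)
    (hX : X = ∑ j : Fin N,
      Matrix.diagonal (D j) * hadamardPow K ((j : ℕ) + 1) * Matrix.diagonal (D j))
    (hXh : X.IsHermitian) :
    (∀ q : ℕ, 1 ≤ q → q ≤ p → topSum X hXh q ≤ topSum K hK.1 q) ∧
    topSum X hXh p = topSum K hK.1 p := by
  classical
  have hD' : ∀ a, ∑ j, D j a * D j a = 1 := by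
    intro a
    have := congrFun (congrFun hD a) a
    simpa [Matrix.sum_apply, pow_two, Matrix.mul_diagonal, Matrix.diagonal_apply_eq,
      Matrix.one_apply_eq] using this
  have hXent : ∀ a b, X a b = ∑ j : Fin N, D j a * K a b ^ ((j : ℕ) + 1) * D j b := by
    intro a b
    rw [hX]
    simp [Matrix.sum_apply, Matrix.mul_diagonal, Matrix.diagonal_mul, hadamardPow]
  constructor
  · intro q hq1 hqp
    obtain ⟨S, hScard, hSsum⟩ := StmtAux.exists_subset_topSum X hXh hqp
    obtain ⟨Q, hQ, hQ1, hQtr, hQX⟩ := StmtAux.exists_proj X hXh S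
    have hR : (StmtAux.Phi K D Q).PosSemidef := StmtAux.Phi_psd hK D hQ
    have hR1 : ((1 : Matrix (Fin p) (Fin p) ℝ) - StmtAux.Phi K D Q).PosSemidef := by
      rw [← StmtAux.Phi_sub_one hdiag hD' Q]
      exact StmtAux.Phi_psd hK D hQ1
    have hRtr : (StmtAux.Phi K D Q).trace = (q : ℝ) := by
      rw [StmtAux.Phi_trace hdiag hD' Q, hQtr, hScard]
    calc topSum X hXh q = (Q * X).trace := by rw [hSsum, ← hQX]
      _ = (StmtAux.Phi K D Q * K).trace := StmtAux.Phi_trace_mul hK.1 hXent Q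
      _ ≤ topSum K hK.1 q := StmtAux.trace_mul_le_topSum hK.1 hR hR1 hq1 hqp hRtr
  · rw [StmtAux.topSum_top, StmtAux.topSum_top]
    have hXd : ∀ a, X a a = 1 := by
      intro a
      rw [hXent a a]
      simp only [hdiag, one_pow, mul_one]
      exact hD' a
    have hXtr : X.trace = (p : ℝ) := by simp [Matrix.trace, Matrix.diag, hXd]
    have hKtr : K.trace = (p : ℝ) := by simp [Matrix.trace, Matrix.diag, hdiag]
    rw [hXtr, hKtr]
end

section
/- If X = Σ_{j=1}^N F_j K F_j where K is symmetric and F_j are diagonal matrices with Σ_j F_j² = I, then trace(X) = trace(K) and, for each q, the sum of the top q eigenvalues of X is at most that of K (i.e., λ(K) weakly majorizes λ(X)). -/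
open Matrix Finset

private lemma psd_diag_nonneg {n : ℕ} {A : Matrix (Fin n) (Fin n) ℝ} (hA : A.PosSemidef)
    (i : Fin n) : 0 ≤ A i i := by
  exact hA.diag_nonneg

private lemma psd_sum {n m : ℕ} (f : Fin m → Matrix (Fin n) (Fin n) ℝ)
    (h : ∀ j, (f j).PosSemidef) : (∑ j, f j).PosSemidef := by
  classical
  exact Finset.sum_induction f _ (fun a b ha hb => ha.add hb) Matrix.PosSemidef.zero
    (fun j _ => h j)

private lemma filter_lt_eq {p q : ℕ} (hq : q ≤ p) :
    ((Finset.univ : Finset (Fin p)).filter fun i => i.val < q)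
      = Finset.map (Fin.castLEEmb hq) Finset.univ := by
  ext i
  simp only [Finset.mem_filter, Finset.mem_univ, true_and, Finset.mem_map,
    Fin.castLEEmb_apply]
  constructor
  · intro h; exact ⟨⟨i.1, h⟩, by ext; rfl⟩
  · rintro ⟨j, rfl⟩; exact j.2

private lemma card_filter_lt {p q : ℕ} (hq : q ≤ p) :
    ((Finset.univ : Finset (Fin p)).filter fun i => i.val < q).card = q := by
  rw [filter_lt_eq hq, Finset.card_map, Finset.card_univ, Fintype.card_fin]

private lemma exists_sortPerm {n : ℕ} (f : Fin n → ℝ) :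
    ∃ σ : Equiv.Perm (Fin n), Antitone (f ∘ σ) ∧
      (List.ofFn f).mergeSort (· ≥ ·) = List.ofFn (f ∘ σ) := by
  haveI : IsAntisymm ℝ (· ≥ ·) := ⟨fun a b h1 h2 => le_antisymm h2 h1⟩
  set τ := Tuple.sort f with hτ
  have hmono := Tuple.monotone_sort f
  have hanti : Antitone (f ∘ (Fin.revPerm.trans τ)) := by
    intro i j hij
    exact hmono (Fin.rev_le_rev.mpr hij)
  refine ⟨Fin.revPerm.trans τ, hanti, ?_⟩
  refine (fun hp h1 h2 => List.Perm.eq_of_pairwise' (r := (· ≥ ·)) h1 h2 hp)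
    (((List.mergeSort_perm _ _)).trans
      (Equiv.Perm.ofFn_comp_perm (Fin.revPerm.trans τ) f).symm) ?_ ?_
  · simpa using List.pairwise_mergeSort (le := fun a b : ℝ => a ≥ b)
      (fun a b c h₁ h₂ => by simpa using le_trans (by simpa using h₂) (by simpa using h₁))
      (fun a b => by simpa using le_total b a) (List.ofFn f)
  · rw [List.pairwise_ofFn]
    intro i j hij
    exact hanti hij.le

private lemma topSum_eq_sum {p : ℕ} (K : Matrix (Fin p) (Fin p) ℝ) (hK : K.IsHermitian) (q : ℕ) :
    ∃ σ : Equiv.Perm (Fin p), Antitone (hK.eigenvalues ∘ σ) ∧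
      topSum K hK q = ∑ i ∈ Finset.univ.filter (fun i : Fin p => i.val < q),
        hK.eigenvalues (σ i) := by
  obtain ⟨σ, h1, h2⟩ := exists_sortPerm hK.eigenvalues
  refine ⟨σ, h1, ?_⟩
  rw [topSum, sortedEigs, h2, List.sum_take_ofFn]
  rfl

private lemma sum_mul_le {p q : ℕ} (hq : q ≤ p) (m c : Fin p → ℝ) (hm : Antitone m)
    (hc0 : ∀ i, 0 ≤ c i) (hc1 : ∀ i, c i ≤ 1) (hsum : ∑ i, c i = q) :
    ∑ i, m i * c i ≤ ∑ i ∈ Finset.univ.filter (fun i : Fin p => i.val < q), m i := by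
  classical
  rcases eq_or_lt_of_le hq with heq | hlt
  · subst heq
    have hfil : (Finset.univ.filter fun i : Fin q => i.val < q) = Finset.univ := by
      ext i; simp [i.2]
    have hall : ∀ i, c i = 1 := by
      intro i
      by_contra hne
      have hlt1 : c i < 1 := lt_of_le_of_ne (hc1 i) hne
      have hlt2 : ∑ j, c j < ∑ _j : Fin q, (1 : ℝ) :=
        Finset.sum_lt_sum (fun j _ => hc1 j) ⟨i, Finset.mem_univ i, hlt1⟩
      rw [hsum] at hlt2
      simp at hlt2
    rw [hfil]
    simp only [hall, mul_one, le_refl]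
  · set t := m ⟨q, hlt⟩ with ht
    set s := Finset.univ.filter fun i : Fin p => i.val < q with hs
    have hcard : s.card = q := card_filter_lt hq
    have hsplit : ∑ i ∈ s, c i + ∑ i ∈ sᶜ, c i = (q : ℝ) := by
      rw [Finset.sum_add_sum_compl, hsum]
    have h1 : ∀ i ∈ s, m i * c i ≤ m i + t * (c i - 1) := by
      intro i hi
      have hiq : i ≤ (⟨q, hlt⟩ : Fin p) := by
        have := (Finset.mem_filter.mp hi).2
        exact Fin.le_def.mpr (le_of_lt this)
      have hmi : t ≤ m i := hm hiq
      nlinarith [hc1 i]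
    have h2 : ∀ i ∈ sᶜ, m i * c i ≤ t * c i := by
      intro i hi
      have hnot : ¬ i.val < q := by
        have := Finset.mem_compl.mp hi
        simpa [hs] using this
      have hiq : (⟨q, hlt⟩ : Fin p) ≤ i := Fin.le_def.mpr (le_of_not_gt hnot)
      have hmi : m i ≤ t := hm hiq
      nlinarith [hc0 i]
    have e1 : ∑ i ∈ s, (m i + t * (c i - 1)) + ∑ i ∈ sᶜ, t * c i = ∑ i ∈ s, m i := by
      rw [Finset.sum_add_distrib, ← Finset.mul_sum, ← Finset.mul_sum, Finset.sum_sub_distrib,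
        Finset.sum_const, hcard, nsmul_eq_mul, mul_one]
      linear_combination t * hsplit
    calc ∑ i, m i * c i = ∑ i ∈ s, m i * c i + ∑ i ∈ sᶜ, m i * c i :=
          (Finset.sum_add_sum_compl s _).symm
      _ ≤ (∑ i ∈ s, (m i + t * (c i - 1))) + ∑ i ∈ sᶜ, t * c i :=
          add_le_add (Finset.sum_le_sum h1) (Finset.sum_le_sum h2)
      _ = ∑ i ∈ s, m i := e1

private lemma trace_conj {n : ℕ} (U M : Matrix (Fin n) (Fin n) ℝ) (hU : star U * U = 1) :
    (U * M * star U).trace = M.trace := by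
  rw [Matrix.trace_mul_cycle, hU, Matrix.one_mul]

private lemma conj_mul_conj {n : ℕ} (U A B : Matrix (Fin n) (Fin n) ℝ) (hU : star U * U = 1) :
    (U * A * star U) * (U * B * star U) = U * (A * B) * star U := by
  simp only [Matrix.mul_assoc]
  rw [← Matrix.mul_assoc (star U) U (B * star U), hU, Matrix.one_mul]

theorem stmt7 {p N : ℕ} (K : Matrix (Fin p) (Fin p) ℝ) (hK : K.IsHermitian)
    (F : Fin N → (Fin p → ℝ))
    (hF : ∑ j, Matrix.diagonal (F j) ^ 2 = (1 : Matrix (Fin p) (Fin p) ℝ))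
    (X : Matrix (Fin p) (Fin p) ℝ)
    (hX : X = ∑ j : Fin N, Matrix.diagonal (F j) * K * Matrix.diagonal (F j))
    (hXh : X.IsHermitian) :
    (∀ q : ℕ, 1 ≤ q → q ≤ p → topSum X hXh q ≤ topSum K hK q) ∧
    X.trace = K.trace := by
  classical
  have hDD : ∑ j, Matrix.diagonal (F j) * Matrix.diagonal (F j)
      = (1 : Matrix (Fin p) (Fin p) ℝ) := by
    simpa only [pow_two] using hF
  constructor
  · intro q hq1 hqp
    set ν := hXh.eigenvalues with hν
    set μ := hK.eigenvalues with hμ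
    set U : Matrix (Fin p) (Fin p) ℝ := (hXh.eigenvectorUnitary : Matrix (Fin p) (Fin p) ℝ)
      with hUdef
    set W : Matrix (Fin p) (Fin p) ℝ := (hK.eigenvectorUnitary : Matrix (Fin p) (Fin p) ℝ)
      with hWdef
    have hU1 : star U * U = 1 := by
      rw [hUdef]; exact Unitary.star_mul_self_of_mem hXh.eigenvectorUnitary.prop
    have hU2 : U * star U = 1 := by
      rw [hUdef]; exact Unitary.mul_star_self_of_mem hXh.eigenvectorUnitary.prop
    have hW1 : star W * W = 1 := by
      rw [hWdef]; exact Unitary.star_mul_self_of_mem hK.eigenvectorUnitary.prop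
    have hW2 : W * star W = 1 := by
      rw [hWdef]; exact Unitary.mul_star_self_of_mem hK.eigenvectorUnitary.prop
    have hXspec : X = U * diagonal ν * star U := by
      rw [hUdef, hν]
      have := hXh.spectral_theorem
      rwa [RCLike.ofReal_real_eq_id, Function.id_comp] at this
    have hKspec : K = W * diagonal μ * star W := by
      rw [hWdef, hμ]
      have := hK.spectral_theorem
      rwa [RCLike.ofReal_real_eq_id, Function.id_comp] at this
    obtain ⟨σ, hσa, hσs⟩ := topSum_eq_sum X hXh q
    obtain ⟨τ, hτa, hτs⟩ := topSum_eq_sum K hK q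
    set fq : Finset (Fin p) := Finset.univ.filter (fun i : Fin p => i.val < q) with hfq
    set s : Finset (Fin p) := fq.image σ with hsdef
    set e : Fin p → ℝ := fun i => if i ∈ s then 1 else 0 with he
    have hcs : s.card = q := by
      rw [hsdef, Finset.card_image_of_injective _ σ.injective, hfq, card_filter_lt hqp]
    have hee : ∀ (d : Fin p → ℝ), (∀ i, d i = 0 ∨ d i = 1) →
        diagonal d * diagonal d = diagonal d := by
      intro d hd
      have hdd : (fun i => d i * d i) = d := funext fun i => by
        rcases hd i with h | h <;> simp [h]
      rw [diagonal_mul_diagonal, hdd]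
    have he01 : ∀ i, e i = 0 ∨ e i = 1 := by
      intro i; by_cases h : i ∈ s <;> simp [he, h]
    set P : Matrix (Fin p) (Fin p) ℝ := U * diagonal e * star U with hP
    set Q : Matrix (Fin p) (Fin p) ℝ :=
      ∑ j, Matrix.diagonal (F j) * P * Matrix.diagonal (F j) with hQ
    set C : Matrix (Fin p) (Fin p) ℝ := star W * Q * W with hC
    have hproj : ∀ (d : Fin p → ℝ), (∀ i, d i = 0 ∨ d i = 1) →
        (U * diagonal d * star U).PosSemidef := by
      intro d hd
      have hds : star (diagonal d) = diagonal d := by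
        simp [Matrix.star_eq_conjTranspose, diagonal_conjTranspose]
      have h1 : (U * diagonal d) * star (U * diagonal d) = U * diagonal d * star U := by
        have hsm : star (U * diagonal d) = diagonal d * star U := by
          rw [StarMul.star_mul, hds]
        rw [hsm, Matrix.mul_assoc, ← Matrix.mul_assoc (diagonal d) (diagonal d), hee d hd]
        simp only [Matrix.mul_assoc]
      exact h1 ▸ posSemidef_self_mul_conjTranspose (U * diagonal d)
    have hPpsd : P.PosSemidef := by rw [hP]; exact hproj e he01
    have hPcpsd : ((1 : Matrix (Fin p) (Fin p) ℝ) - P).PosSemidef := by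
      have hd : diagonal (fun i => 1 - e i) = 1 - diagonal e := by
        rw [← Matrix.diagonal_one, Matrix.diagonal_sub]
      have h1 : (1 : Matrix (Fin p) (Fin p) ℝ) - P
          = U * diagonal (fun i => 1 - e i) * star U := by
        rw [hd, Matrix.mul_sub, Matrix.sub_mul, Matrix.mul_one, hU2, hP]
      rw [h1]
      exact hproj _ (fun i => by rcases he01 i with h | h <;> simp [h])
    have hDPD : ∀ j, (Matrix.diagonal (F j) * P * Matrix.diagonal (F j)).PosSemidef := by
      intro j
      have := hPpsd.mul_mul_conjTranspose_same (Matrix.diagonal (F j))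
      simpa [Matrix.star_eq_conjTranspose, diagonal_conjTranspose] using this
    have hQpsd : Q.PosSemidef := by rw [hQ]; exact psd_sum _ hDPD
    have hQc : (1 : Matrix (Fin p) (Fin p) ℝ) - Q
        = ∑ j, Matrix.diagonal (F j) * ((1 : Matrix (Fin p) (Fin p) ℝ) - P)
            * Matrix.diagonal (F j) := by
      simp only [Matrix.mul_sub, Matrix.sub_mul, Matrix.mul_one]
      rw [Finset.sum_sub_distrib, hDD, ← hQ]
    have hQcpsd : ((1 : Matrix (Fin p) (Fin p) ℝ) - Q).PosSemidef := by
      rw [hQc]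
      refine psd_sum _ (fun j => ?_)
      have := hPcpsd.mul_mul_conjTranspose_same (Matrix.diagonal (F j))
      simpa [Matrix.star_eq_conjTranspose, diagonal_conjTranspose] using this
    have hCpsd : C.PosSemidef := by
      rw [hC]
      have := hQpsd.conjTranspose_mul_mul_same W
      simpa [Matrix.star_eq_conjTranspose] using this
    have hCcpsd : ((1 : Matrix (Fin p) (Fin p) ℝ) - C).PosSemidef := by
      have h1 : (1 : Matrix (Fin p) (Fin p) ℝ) - C = star W * (1 - Q) * W := by
        rw [Matrix.mul_sub, Matrix.mul_one, Matrix.sub_mul, hW1, hC]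
      rw [h1]
      have := hQcpsd.conjTranspose_mul_mul_same W
      simpa [Matrix.star_eq_conjTranspose] using this
    -- trace chain
    have step1 : topSum X hXh q = ∑ i ∈ s, ν i := by
      rw [hσs, hsdef]
      exact (Finset.sum_image (fun x _ y _ h => σ.injective h)).symm
    have step2 : ∑ i ∈ s, ν i = ∑ i, e i * ν i := by
      calc ∑ i ∈ s, ν i = ∑ i ∈ Finset.univ.filter (· ∈ s), ν i := by
            rw [Finset.filter_univ_mem]
        _ = ∑ i, if i ∈ s then ν i else 0 := Finset.sum_filter _ _
        _ = ∑ i, e i * ν i := by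
            refine Finset.sum_congr rfl (fun i _ => ?_)
            by_cases h : i ∈ s <;> simp [he, h]
    have step3 : ∑ i, e i * ν i = (P * X).trace := by
      rw [hP, hXspec, conj_mul_conj U _ _ hU1, trace_conj U _ hU1, diagonal_mul_diagonal,
        trace_diagonal]
    have step4 : (P * X).trace = (Q * K).trace := by
      rw [hX, Finset.mul_sum, trace_sum, hQ, Finset.sum_mul, trace_sum]
      refine Finset.sum_congr rfl (fun j _ => ?_)
      calc (P * (Matrix.diagonal (F j) * K * Matrix.diagonal (F j))).trace
          = (P * (Matrix.diagonal (F j) * K) * Matrix.diagonal (F j)).trace := by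
            simp only [Matrix.mul_assoc]
        _ = (Matrix.diagonal (F j) * P * (Matrix.diagonal (F j) * K)).trace := by
            rw [Matrix.trace_mul_cycle, Matrix.mul_assoc]
        _ = (Matrix.diagonal (F j) * P * Matrix.diagonal (F j) * K).trace := by
            simp only [Matrix.mul_assoc]
    have step5 : (Q * K).trace = ∑ i, C i i * μ i := by
      rw [hKspec]
      calc (Q * (W * diagonal μ * star W)).trace
          = ((Q * W) * diagonal μ * star W).trace := by simp only [Matrix.mul_assoc]
        _ = (star W * (Q * W) * diagonal μ).trace := Matrix.trace_mul_cycle _ _ _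
        _ = (C * diagonal μ).trace := by rw [hC]; simp only [Matrix.mul_assoc]
        _ = ∑ i, C i i * μ i := by
            simp [Matrix.trace, Matrix.diag, Matrix.mul_diagonal]
    have htrC : ∑ i, C i i = (q : ℝ) := by
      have h1 : C.trace = Q.trace := by
        rw [hC, Matrix.trace_mul_cycle, hW2, Matrix.one_mul]
      have h2 : Q.trace = P.trace := by
        rw [hQ, trace_sum]
        have hterm : ∀ j, (Matrix.diagonal (F j) * P * Matrix.diagonal (F j)).trace
            = (Matrix.diagonal (F j) * Matrix.diagonal (F j) * P).trace := fun j =>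
          Matrix.trace_mul_cycle (Matrix.diagonal (F j)) P (Matrix.diagonal (F j))
        rw [Finset.sum_congr rfl (fun j _ => hterm j), ← trace_sum, ← Finset.sum_mul, hDD,
          Matrix.one_mul]
      have h3 : P.trace = (q : ℝ) := by
        rw [hP, trace_conj U _ hU1, trace_diagonal, he]
        rw [Finset.sum_boole, Finset.filter_univ_mem, hcs]
      have := h1.trans (h2.trans h3)
      simpa [Matrix.trace, Matrix.diag] using this
    have hc0 : ∀ i, 0 ≤ C i i := psd_diag_nonneg hCpsd
    have hc1 : ∀ i, C i i ≤ 1 := by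
      intro i
      have h := psd_diag_nonneg hCcpsd i
      simp only [Matrix.sub_apply, Matrix.one_apply_eq] at h
      linarith
    calc topSum X hXh q = ∑ i, C i i * μ i := by
          rw [step1, step2, step3, step4, step5]
      _ = ∑ i, C (τ i) (τ i) * μ (τ i) := (Equiv.sum_comp τ (fun i => C i i * μ i)).symm
      _ = ∑ i, μ (τ i) * C (τ i) (τ i) := Finset.sum_congr rfl (fun i _ => mul_comm _ _)
      _ ≤ ∑ i ∈ Finset.univ.filter (fun i : Fin p => i.val < q), μ (τ i) := by
          refine sum_mul_le hqp (fun i => μ (τ i)) (fun i => C (τ i) (τ i)) hτa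
            (fun i => hc0 (τ i)) (fun i => hc1 (τ i)) ?_
          rw [Equiv.sum_comp τ (fun i => C i i)]
          exact htrC
      _ = topSum K hK q := hτs.symm
  · rw [hX, trace_sum]
    have hterm : ∀ j, (Matrix.diagonal (F j) * K * Matrix.diagonal (F j)).trace
        = (Matrix.diagonal (F j) * Matrix.diagonal (F j) * K).trace := fun j =>
      Matrix.trace_mul_cycle (Matrix.diagonal (F j)) K (Matrix.diagonal (F j))
    rw [Finset.sum_congr rfl (fun j _ => hterm j), ← trace_sum, ← Finset.sum_mul, hDD,
      Matrix.one_mul]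
end

section
/- If a Hermitian matrix A is a convex combination of unitary conjugates of a Hermitian matrix B, A = Σ_j t_j U_j B U_j* with t_j ≥ 0, Σ t_j = 1, then the eigenvalue vector of B majorizes that of A. -/
open Matrix

/-- Eigenvalues of a Hermitian complex matrix, sorted in decreasing order. -/
noncomputable def sortedEigsC {n : ℕ} (A : Matrix (Fin n) (Fin n) ℂ) (hA : A.IsHermitian) :
    List ℝ :=
  (List.ofFn hA.eigenvalues).mergeSort (· ≥ ·)

/-- Sum of the top `q` eigenvalues of a Hermitian complex matrix. -/
noncomputable def topSumC {n : ℕ} (A : Matrix (Fin n) (Fin n) ℂ) (hA : A.IsHermitian) (q : ℕ) :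
    ℝ :=
  ((sortedEigsC A hA).take q).sum

lemma take_ofFn_list {α : Type*} {n q : ℕ} (f : Fin n → α) (hq : q ≤ n) :
    (List.ofFn f).take q = List.ofFn (fun k : Fin q => f (Fin.castLE hq k)) := by
  apply List.ext_getElem
  · simp [hq]
  · intro i h1 h2
    simp [List.getElem_take, List.getElem_ofFn]

lemma exists_antitone_arrangement {n : ℕ} (μ : Fin n → ℝ) :
    ∃ g : Equiv.Perm (Fin n), Antitone (μ ∘ ⇑g) ∧
      (List.ofFn μ).mergeSort (· ≥ ·) = List.ofFn (μ ∘ ⇑g) := by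
  set g : Equiv.Perm (Fin n) := Fin.revPerm.trans (Tuple.sort μ) with hg
  have hanti : Antitone (μ ∘ ⇑g) := by
    intro a b hab
    exact Tuple.monotone_sort μ (by simpa [hg, Fin.rev_le_rev] using hab)
  refine ⟨g, hanti, ?_⟩
  haveI : Std.Antisymm (· ≥ · : ℝ → ℝ → Prop) := ⟨fun a b h1 h2 => le_antisymm h2 h1⟩
  refine (fun h1 h2 h3 => List.Perm.eq_of_pairwise' (r := (· ≥ ·)) h2 h3 h1) ?_ ?_ ?_
  · exact (List.mergeSort_perm _ _).trans (Equiv.Perm.ofFn_comp_perm g μ).symm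
  · have h := List.pairwise_mergeSort (le := fun a b : ℝ => decide (a ≥ b))
      (fun a b c h1 h2 => by simp_all; linarith)
      (fun a b => by simpa using le_total b a) (List.ofFn μ)
    exact h.imp fun h => of_decide_eq_true h
  · rw [List.pairwise_ofFn]
    intro i j hij
    exact hanti hij.le

lemma topSumC_eq {n q : ℕ} (hq : q ≤ n) (A : Matrix (Fin n) (Fin n) ℂ) (hA : A.IsHermitian)
    (g : Equiv.Perm (Fin n))
    (hgeq : (List.ofFn hA.eigenvalues).mergeSort (· ≥ ·) = List.ofFn (hA.eigenvalues ∘ ⇑g)) :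
    topSumC A hA q = ∑ k : Fin q, hA.eigenvalues (g (Fin.castLE hq k)) := by
  unfold topSumC sortedEigsC
  rw [hgeq, take_ofFn_list _ hq, List.sum_ofFn]
  rfl

lemma sum_mul_le_top {n q : ℕ} (hq1 : 1 ≤ q) (hqn : q ≤ n) (μ d : Fin n → ℝ)
    (g : Equiv.Perm (Fin n)) (hg : Antitone (μ ∘ ⇑g))
    (hd0 : ∀ i, 0 ≤ d i) (hd1 : ∀ i, d i ≤ 1) (hsum : ∑ i, d i = q) :
    ∑ i, μ i * d i ≤ ∑ k : Fin q, μ (g (Fin.castLE hqn k)) := by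
  set l : ℝ := μ (g ⟨q - 1, by omega⟩) with hl
  have key : ∀ k : Fin n,
      μ (g k) * d (g k) ≤ (if (k : ℕ) < q then μ (g k) - l else 0) + l * d (g k) := by
    intro k
    by_cases hk : (k : ℕ) < q
    · have h1 : l ≤ μ (g k) := hg (show k ≤ ⟨q - 1, by omega⟩ by simp [Fin.le_def]; omega)
      have h2 := hd1 (g k)
      simp only [if_pos hk]
      nlinarith [hd0 (g k)]
    · have h1 : μ (g k) ≤ l := hg (show (⟨q - 1, by omega⟩ : Fin n) ≤ k by
        simp [Fin.le_def]; omega)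
      simp only [if_neg hk]
      nlinarith [hd0 (g k)]
  calc ∑ i, μ i * d i = ∑ k : Fin n, μ (g k) * d (g k) := (Equiv.sum_comp g _).symm
    _ ≤ ∑ k : Fin n, ((if (k : ℕ) < q then μ (g k) - l else 0) + l * d (g k)) :=
        Finset.sum_le_sum fun k _ => key k
    _ = (∑ k : Fin n, if (k : ℕ) < q then μ (g k) - l else 0) + l * ∑ k : Fin n, d (g k) := by
        rw [Finset.sum_add_distrib, Finset.mul_sum]
    _ = (∑ k : Fin q, (μ (g (Fin.castLE hqn k)) - l)) + l * (q : ℝ) := by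
        congr 1
        · rw [← Finset.sum_filter]
          refine (Finset.sum_bij' (fun (k : Fin q) _ => Fin.castLE hqn k)
            (fun k hk => ⟨(k : ℕ), (Finset.mem_filter.mp hk).2⟩) ?_ ?_ ?_ ?_ ?_).symm
          · intro k _; simp [Fin.castLE]
          · intro k hk; simp
          · intro k _; rfl
          · intro k hk; rfl
          · intro k _; rfl
        · rw [Equiv.sum_comp g d, hsum]
    _ = ∑ k : Fin q, μ (g (Fin.castLE hqn k)) := by
        rw [Finset.sum_sub_distrib]
        simp [Finset.card_univ]
        ring

lemma star_mul_self_normSq (z : ℂ) : star z * z = (Complex.normSq z : ℂ) := by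
  rw [Complex.star_def, ← Complex.normSq_eq_conj_mul_self]

lemma trace_conj_diag {n q : ℕ} (μ : Fin n → ℝ) (W : Matrix (Fin n) (Fin q) ℂ) :
    trace (Wᴴ * diagonal (Complex.ofReal ∘ μ) * W) =
      ((∑ i, μ i * ∑ k, Complex.normSq (W i k) : ℝ) : ℂ) := by
  rw [Matrix.mul_assoc]
  have hDW : diagonal (Complex.ofReal ∘ μ) * W = Matrix.of fun j k => (μ j : ℂ) * W j k := by
    ext j k; simp [diagonal_mul]
  rw [hDW]
  simp only [trace, diag_apply, mul_apply, conjTranspose_apply, Matrix.of_apply]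
  rw [Finset.sum_comm]
  push_cast
  congr 1; ext i
  rw [Finset.mul_sum]
  congr 1; ext k
  rw [mul_left_comm, star_mul_self_normSq]

lemma d_le_one {n q : ℕ} (W : Matrix (Fin n) (Fin q) ℂ) (hW : Wᴴ * W = 1) (i : Fin n) :
    ∑ k, Complex.normSq (W i k) ≤ 1 := by
  set P := W * Wᴴ with hP
  have hPH : Pᴴ = P := by rw [hP, conjTranspose_mul, conjTranspose_conjTranspose]
  have hP2 : P * P = P := by rw [hP, Matrix.mul_assoc, ← Matrix.mul_assoc Wᴴ, hW, Matrix.one_mul]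
  set d : ℝ := ∑ k, Complex.normSq (W i k) with hd
  have hdiag : P i i = (d : ℂ) := by
    rw [hP, mul_apply, hd]
    push_cast
    congr 1; ext k
    rw [conjTranspose_apply, mul_comm, star_mul_self_normSq]
  have hPii : P i i = ((∑ j, Complex.normSq (P i j) : ℝ) : ℂ) := by
    conv_lhs => rw [← hP2, mul_apply]
    push_cast
    congr 1; ext j
    have hji : P j i = star (P i j) := by conv_lhs => rw [← hPH, conjTranspose_apply]
    rw [hji, mul_comm, star_mul_self_normSq]
  have hd2 : d ^ 2 ≤ d := by
    have h1 : d = ∑ j, Complex.normSq (P i j) := by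
      have := hdiag.symm.trans hPii
      exact_mod_cast this
    have h2 : Complex.normSq (P i i) ≤ ∑ j, Complex.normSq (P i j) :=
      Finset.single_le_sum (fun j _ => Complex.normSq_nonneg _) (Finset.mem_univ i)
    have h3 : Complex.normSq (P i i) = d ^ 2 := by
      rw [hdiag]
      simp [Complex.normSq_ofReal, sq]
    linarith [h3 ▸ h2, h1]
  have hd0 : 0 ≤ d := Finset.sum_nonneg fun k _ => Complex.normSq_nonneg _
  nlinarith

lemma sum_d_eq {n q : ℕ} (W : Matrix (Fin n) (Fin q) ℂ) (hW : Wᴴ * W = 1) :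
    ∑ i, ∑ k, Complex.normSq (W i k) = (q : ℝ) := by
  rw [Finset.sum_comm]
  have : ∀ k : Fin q, ∑ i, Complex.normSq (W i k) = 1 := by
    intro k
    have h := congrArg (fun M => M k k) hW
    simp only [mul_apply, one_apply_eq, conjTranspose_apply] at h
    have : ((∑ i, Complex.normSq (W i k) : ℝ) : ℂ) = 1 := by
      rw [← h]
      push_cast
      congr 1; ext i
      rw [star_mul_self_normSq]
    exact_mod_cast this
  simp [this]

lemma unitary_QhQ {n : ℕ} (Q : Matrix (Fin n) (Fin n) ℂ) (h : Q ∈ Matrix.unitaryGroup (Fin n) ℂ) :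
    Qᴴ * Q = 1 ∧ Q * Qᴴ = 1 := by
  constructor
  · simpa [Matrix.star_eq_conjTranspose] using (Unitary.mem_iff.mp h).1
  · simpa [Matrix.star_eq_conjTranspose] using (Unitary.mem_iff.mp h).2

lemma conj_form {n q : ℕ} (M : Matrix (Fin n) (Fin n) ℂ) (hM : M.IsHermitian)
    (V : Matrix (Fin n) (Fin q) ℂ) :
    Vᴴ * M * V = ((hM.eigenvectorUnitary : Matrix (Fin n) (Fin n) ℂ)ᴴ * V)ᴴ *
      diagonal (Complex.ofReal ∘ hM.eigenvalues) *
      ((hM.eigenvectorUnitary : Matrix (Fin n) (Fin n) ℂ)ᴴ * V) := by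
  conv_lhs => rw [hM.spectral_theorem, Unitary.conjStarAlgAut_apply]
  rw [conjTranspose_mul, conjTranspose_conjTranspose]
  simp only [Matrix.star_eq_conjTranspose, Matrix.mul_assoc]
  rfl

lemma kyfan_upper {n q : ℕ} (hq1 : 1 ≤ q) (hqn : q ≤ n)
    (M : Matrix (Fin n) (Fin n) ℂ) (hM : M.IsHermitian)
    (V : Matrix (Fin n) (Fin q) ℂ) (hV : Vᴴ * V = 1) :
    (trace (Vᴴ * M * V)).re ≤ topSumC M hM q := by
  obtain ⟨g, hganti, hgeq⟩ := exists_antitone_arrangement hM.eigenvalues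
  set Q : Matrix (Fin n) (Fin n) ℂ := (hM.eigenvectorUnitary : Matrix (Fin n) (Fin n) ℂ) with hQdef
  obtain ⟨hQl, hQr⟩ := unitary_QhQ Q hM.eigenvectorUnitary.2
  set W := Qᴴ * V with hWdef
  have hWW : Wᴴ * W = 1 := by
    rw [hWdef, conjTranspose_mul, conjTranspose_conjTranspose, Matrix.mul_assoc,
      ← Matrix.mul_assoc Q, hQr, Matrix.one_mul, hV]
  rw [conj_form M hM V, ← hQdef, ← hWdef, trace_conj_diag, Complex.ofReal_re,
    topSumC_eq hqn M hM g hgeq]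
  exact sum_mul_le_top hq1 hqn _ _ g hganti
    (fun i => Finset.sum_nonneg fun k _ => Complex.normSq_nonneg _)
    (d_le_one W hWW) (sum_d_eq W hWW)

lemma kyfan_achieve {n q : ℕ} (hqn : q ≤ n) (A : Matrix (Fin n) (Fin n) ℂ)
    (hA : A.IsHermitian) :
    ∃ V : Matrix (Fin n) (Fin q) ℂ, Vᴴ * V = 1 ∧
      (trace (Vᴴ * A * V)).re = topSumC A hA q := by
  obtain ⟨g, hganti, hgeq⟩ := exists_antitone_arrangement hA.eigenvalues
  set Q : Matrix (Fin n) (Fin n) ℂ := (hA.eigenvectorUnitary : Matrix (Fin n) (Fin n) ℂ) with hQdef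
  obtain ⟨hQl, hQr⟩ := unitary_QhQ Q hA.eigenvectorUnitary.2
  have key : ∀ a b, (∑ i, star (Q i a) * Q i b) = if a = b then (1 : ℂ) else 0 := by
    intro a b
    have h := congrArg (fun M => M a b) hQl
    simpa [mul_apply, conjTranspose_apply, one_apply] using h
  set V : Matrix (Fin n) (Fin q) ℂ :=
    Q.submatrix id (fun k : Fin q => g (Fin.castLE hqn k)) with hVdef
  have hinj : Function.Injective (fun k : Fin q => g (Fin.castLE hqn k)) :=
    fun a b hab => by
      have := g.injective hab
      exact Fin.castLE_injective hqn this
  have hVV : Vᴴ * V = 1 := by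
    ext k l
    simp only [mul_apply, conjTranspose_apply, hVdef, submatrix_apply, id_eq]
    rw [key]
    by_cases h : k = l
    · subst h; rw [if_pos rfl, one_apply_eq]
    · rw [if_neg (fun hc => h (hinj hc)), one_apply_ne h]
  refine ⟨V, hVV, ?_⟩
  set W := Qᴴ * V with hWdef
  have hWa : ∀ i k, W i k = if i = g (Fin.castLE hqn k) then (1 : ℂ) else 0 := by
    intro i k
    rw [hWdef, mul_apply]
    simp only [conjTranspose_apply, hVdef, submatrix_apply, id_eq]
    exact key i (g (Fin.castLE hqn k))
  rw [conj_form A hA V, ← hQdef, ← hWdef, trace_conj_diag, Complex.ofReal_re,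
    topSumC_eq hqn A hA g hgeq]
  calc ∑ i, hA.eigenvalues i * ∑ k, Complex.normSq (W i k)
      = ∑ i, ∑ k : Fin q, (if i = g (Fin.castLE hqn k) then hA.eigenvalues i else 0) := by
        refine Finset.sum_congr rfl fun i _ => ?_
        rw [Finset.mul_sum]
        refine Finset.sum_congr rfl fun k _ => ?_
        rw [hWa]
        split <;> simp
    _ = ∑ k : Fin q, ∑ i, (if i = g (Fin.castLE hqn k) then hA.eigenvalues i else 0) :=
        Finset.sum_comm
    _ = ∑ k : Fin q, hA.eigenvalues (g (Fin.castLE hqn k)) := by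
        refine Finset.sum_congr rfl fun k _ => ?_
        simp

theorem stmt8 {n N : ℕ} (A B : Matrix (Fin n) (Fin n) ℂ)
    (hA : A.IsHermitian) (hB : B.IsHermitian)
    (U : Fin N → Matrix (Fin n) (Fin n) ℂ)
    (hU : ∀ j, U j ∈ Matrix.unitaryGroup (Fin n) ℂ)
    (t : Fin N → ℝ) (ht0 : ∀ j, 0 ≤ t j) (ht1 : ∑ j, t j = 1)
    (hAB : A = ∑ j, (t j : ℂ) • (U j * B * (U j)ᴴ)) :
    (∀ q : ℕ, 1 ≤ q → q ≤ n → topSumC A hA q ≤ topSumC B hB q) ∧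
    A.trace = B.trace := by
  constructor
  · intro q hq1 hqn
    obtain ⟨V, hVV, hVach⟩ := kyfan_achieve hqn A hA
    have expand : Vᴴ * A * V = ∑ j, (t j : ℂ) • (Vᴴ * (U j * B * (U j)ᴴ) * V) := by
      rw [hAB]
      simp only [Matrix.mul_sum, Matrix.sum_mul, Matrix.mul_smul, Matrix.smul_mul]
    have htr : (trace (Vᴴ * A * V)).re = ∑ j, t j * (trace (Vᴴ * (U j * B * (U j)ᴴ) * V)).re := by
      rw [expand, trace_sum]
      rw [Complex.re_sum]
      congr 1; ext j
      rw [trace_smul]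
      simp [Complex.mul_re]
    have hterm : ∀ j, (trace (Vᴴ * (U j * B * (U j)ᴴ) * V)).re ≤ topSumC B hB q := by
      intro j
      have hre : Vᴴ * (U j * B * (U j)ᴴ) * V = ((U j)ᴴ * V)ᴴ * B * ((U j)ᴴ * V) := by
        rw [conjTranspose_mul, conjTranspose_conjTranspose]
        simp only [Matrix.mul_assoc]
      have hWV : ((U j)ᴴ * V)ᴴ * ((U j)ᴴ * V) = 1 := by
        rw [conjTranspose_mul, conjTranspose_conjTranspose, Matrix.mul_assoc,
          ← Matrix.mul_assoc (U j), (unitary_QhQ (U j) (hU j)).2, Matrix.one_mul, hVV]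
      rw [hre]
      exact kyfan_upper hq1 hqn B hB _ hWV
    calc topSumC A hA q = (trace (Vᴴ * A * V)).re := hVach.symm
      _ = ∑ j, t j * (trace (Vᴴ * (U j * B * (U j)ᴴ) * V)).re := htr
      _ ≤ ∑ j, t j * topSumC B hB q :=
          Finset.sum_le_sum fun j _ => mul_le_mul_of_nonneg_left (hterm j) (ht0 j)
      _ = topSumC B hB q := by rw [← Finset.sum_mul, ht1, one_mul]
  · rw [hAB, trace_sum]
    have : ∀ j, ((t j : ℂ) • (U j * B * (U j)ᴴ)).trace = (t j : ℂ) * B.trace := by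
      intro j
      rw [trace_smul, smul_eq_mul]
      congr 1
      rw [trace_mul_comm, ← Matrix.mul_assoc, (unitary_QhQ (U j) (hU j)).1, Matrix.one_mul]
    rw [Finset.sum_congr rfl (fun j _ => this j), ← Finset.sum_mul]
    have : (∑ j, (t j : ℂ)) = 1 := by exact_mod_cast congrArg Complex.ofReal ht1
    rw [this, one_mul]
end
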